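/- Let R be a commutative ℚ-algebra with unit (i.e. a linear commutative unitary ring), n ≥ 1, and let A : R → R be additive. Then A ∈ Dₙ(R) if and only if the univariate identity Σ_{i=0}^{n} (−1)^i C(n+1, i) x^i A(x^{n+1−i}) = 0 holds for all x ∈ R. -/

import Mathlib

set_option linter.unusedSectionVars false
set_option maxHeartbeats 1000000

/-- `IsDerOrd R n f` : `f` is a derivation of order `n` in the sense of Reich:
`D₀(R) = {0}`, and `f ∈ Dₙ(R)` iff `f` is additive and
`B(x,y) = f(xy) − x·f(y) − f(x)·y` is a derivation of order `n−1` in each variable. -/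
def IsDerOrd (R : Type*) [CommRing R] : ℕ → (R → R) → Prop
  | 0, f => f = 0
  | n + 1, f => (∀ x y : R, f (x + y) = f x + f y) ∧
      (∀ y : R, IsDerOrd R n (fun x => f (x * y) - x * f y - f x * y)) ∧
      (∀ x : R, IsDerOrd R n (fun y => f (x * y) - x * f y - f x * y))

open Finset

section Aux

variable {R : Type*} [CommRing R]

def dlt (f : R → R) (z : R) : R → R := fun y => f (z * y) - z * f y - f z * y

def MIt : (R → R) → List R → R → R
  | f, [], y => f y
  | f, z :: l, y => MIt (dlt f z) l y

lemma dlt_comm (f : R → R) (a b : R) : dlt (dlt f a) b = dlt (dlt f b) a := by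
  funext y; simp only [dlt]; ring_nf

lemma dlt_last (f : R → R) (a b : R) : dlt f a b = dlt f b a := by
  simp only [dlt]; ring_nf

lemma mit_perm : ∀ {l₁ l₂ : List R}, l₁.Perm l₂ → ∀ (f : R → R) (y : R), MIt f l₁ y = MIt f l₂ y := by
  intro l₁ l₂ h
  induction h with
  | nil => intro f y; rfl
  | cons a _ ih => intro f y; simp only [MIt]; exact ih _ _
  | swap a b l => intro f y; simp only [MIt]; rw [dlt_comm]
  | trans _ _ ih₁ ih₂ => intro f y; rw [ih₁, ih₂]

lemma mit_last_swap : ∀ (l : List R) (f : R → R) (a b : R),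
    MIt f (l ++ [a]) b = MIt f (l ++ [b]) a := by
  intro l
  induction l with
  | nil => intro f a b; simp only [List.nil_append, MIt]; exact dlt_last f a b
  | cons z l ih => intro f a b; simp only [List.cons_append, MIt]; exact ih _ _ _

lemma clause_eq (f : R → R) (z : R) : (fun x => f (x * z) - x * f z - f x * z) = dlt f z := by
  funext x; simp only [dlt]; ring_nf

lemma isDerOrd_succ (f : R → R) (n : ℕ) :
    IsDerOrd R (n + 1) f ↔ (∀ x y : R, f (x + y) = f x + f y) ∧ ∀ z, IsDerOrd R n (dlt f z) := by
  show (_ ∧ _ ∧ _) ↔ _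
  constructor
  · rintro ⟨h1, h2, _⟩
    exact ⟨h1, fun z => by rw [← clause_eq]; exact h2 z⟩
  · rintro ⟨h1, h2⟩
    refine ⟨h1, fun z => by rw [clause_eq]; exact h2 z, fun z => ?_⟩
    have : (fun y => f (z * y) - z * f y - f z * y) = dlt f z := rfl
    rw [this]; exact h2 z

lemma dlt_add {f : R → R} (hf : ∀ x y, f (x + y) = f x + f y) (z : R) :
    ∀ x y, dlt f z (x + y) = dlt f z x + dlt f z y := by
  intro x y; simp only [dlt, mul_add, hf]; ring

lemma char_mit :
    ∀ (n : ℕ) (A : R → R), (∀ x y : R, A (x + y) = A x + A y) →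
      (IsDerOrd R n A ↔ ∀ l : List R, l.length = n → ∀ y, MIt A l y = 0) := by
  intro n
  induction n with
  | zero =>
    intro A _
    show A = 0 ↔ _
    constructor
    · rintro rfl l hl y
      rw [List.length_eq_zero_iff] at hl; subst hl; rfl
    · intro h; funext y; exact h [] rfl y
  | succ n ih =>
    intro A hA
    rw [isDerOrd_succ]
    constructor
    · rintro ⟨-, h2⟩ l hl y
      match l, hl with
      | z :: l, hl =>
        have := (ih (dlt A z) (dlt_add hA z)).1 (h2 z) l (by simpa using hl) y
        simpa [MIt] using this
    · intro h
      refine ⟨hA, fun z => (ih (dlt A z) (dlt_add hA z)).2 ?_⟩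
      intro l hl y
      exact h (z :: l) (by simp [hl]) y

lemma alt_sum (n : ℕ) : ∑ i ∈ range (n + 1), (-1 : R) ^ i * ((n + 1).choose i : R) = (-1 : R) ^ n := by
  have h := Int.alternating_sum_range_choose (n := n + 1)
  simp only [Nat.succ_ne_zero, if_false] at h
  have h2 : ((∑ i ∈ range (n + 2), (-1 : ℤ) ^ i * ((n + 1).choose i : ℤ) : ℤ) : R) = 0 := by
    rw [h]; norm_num
  push_cast at h2
  rw [Finset.sum_range_succ] at h2
  have h3 : (-1 : R) ^ (n + 1) * ((n + 1).choose (n + 1) : R) = -(-1 : R) ^ n := by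
    simp [pow_succ]
  rw [h3] at h2
  linear_combination h2

lemma F_step (A : R → R) (x : R) (n : ℕ) :
    ∑ i ∈ range (n + 1), (-1 : R) ^ i * ((n + 1).choose i : R) * x ^ i * dlt A x (x ^ (n + 1 - i))
    = ∑ i ∈ range (n + 2), (-1 : R) ^ i * ((n + 2).choose i : R) * x ^ i * A (x ^ (n + 2 - i)) := by
  set S1 : R := ∑ i ∈ range (n + 1), (-1 : R) ^ i * ((n + 1).choose i : R) * x ^ i * A (x ^ (n + 2 - i)) with hS1
  set S2 : R := ∑ i ∈ range (n + 1), (-1 : R) ^ i * ((n + 1).choose i : R) * x ^ (i + 1) * A (x ^ (n + 1 - i)) with hS2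
  set S4 : R := ∑ i ∈ range (n + 1), (-1 : R) ^ i * ((n + 1).choose (i + 1) : R) * x ^ (i + 1) * A (x ^ (n + 1 - i)) with hS4
  have hL : ∑ i ∈ range (n + 1), (-1 : R) ^ i * ((n + 1).choose i : R) * x ^ i * dlt A x (x ^ (n + 1 - i))
      = S1 - S2 - A x * x ^ (n + 1) * (-1 : R) ^ n := by
    have : ∀ i ∈ range (n + 1),
        (-1 : R) ^ i * ((n + 1).choose i : R) * x ^ i * dlt A x (x ^ (n + 1 - i))
        = (-1 : R) ^ i * ((n + 1).choose i : R) * x ^ i * A (x ^ (n + 2 - i))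
          - (-1 : R) ^ i * ((n + 1).choose i : R) * x ^ (i + 1) * A (x ^ (n + 1 - i))
          - A x * x ^ (n + 1) * ((-1 : R) ^ i * ((n + 1).choose i : R)) := by
      intro i hi
      have hi' : i ≤ n := by simpa [Nat.lt_succ_iff] using hi
      have e1 : x * x ^ (n + 1 - i) = x ^ (n + 2 - i) := by
        rw [← pow_succ']
        congr 1
        omega
      have e2 : x ^ i * x ^ (n + 1 - i) = x ^ (n + 1) := by
        rw [← pow_add]
        congr 1
        omega
      simp only [dlt, e1]
      rw [show (-1 : R) ^ i * ((n + 1).choose i : R) * x ^ i * (A (x ^ (n + 2 - i)) - x * A (x ^ (n + 1 - i)) - A x * x ^ (n + 1 - i))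
        = (-1 : R) ^ i * ((n + 1).choose i : R) * x ^ i * A (x ^ (n + 2 - i))
          - (-1 : R) ^ i * ((n + 1).choose i : R) * x ^ (i + 1) * A (x ^ (n + 1 - i))
          - A x * (x ^ i * x ^ (n + 1 - i)) * ((-1 : R) ^ i * ((n + 1).choose i : R)) by ring, e2]
    rw [Finset.sum_congr rfl this, Finset.sum_sub_distrib, Finset.sum_sub_distrib, ← Finset.mul_sum, alt_sum]
  rw [hL]
  have hR : ∑ i ∈ range (n + 2), (-1 : R) ^ i * ((n + 2).choose i : R) * x ^ i * A (x ^ (n + 2 - i))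
      = -S2 - S4 + A (x ^ (n + 2)) := by
    rw [Finset.sum_range_succ']
    have h0 : (-1 : R) ^ 0 * ((n + 2).choose 0 : R) * x ^ 0 * A (x ^ (n + 2 - 0)) = A (x ^ (n + 2)) := by
      simp
    rw [h0]
    have : ∀ i ∈ range (n + 1),
        (-1 : R) ^ (i + 1) * ((n + 2).choose (i + 1) : R) * x ^ (i + 1) * A (x ^ (n + 2 - (i + 1)))
        = -((-1 : R) ^ i * ((n + 1).choose i : R) * x ^ (i + 1) * A (x ^ (n + 1 - i)))
          + -((-1 : R) ^ i * ((n + 1).choose (i + 1) : R) * x ^ (i + 1) * A (x ^ (n + 1 - i))) := by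
      intro i hi
      have e3 : n + 2 - (i + 1) = n + 1 - i := by omega
      rw [e3, Nat.choose_succ_succ (n + 1) i]
      push_cast
      ring
    rw [Finset.sum_congr rfl this, Finset.sum_add_distrib, Finset.sum_neg_distrib, Finset.sum_neg_distrib,
      ← hS2, ← hS4]
    ring
  rw [hR]
  have hS14 : S1 = -S4 + (-1 : R) ^ n * x ^ (n + 1) * A x + A (x ^ (n + 2)) := by
    rw [hS1, Finset.sum_range_succ']
    have h0 : (-1 : R) ^ 0 * ((n + 1).choose 0 : R) * x ^ 0 * A (x ^ (n + 2 - 0)) = A (x ^ (n + 2)) := by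
      simp
    rw [h0]
    have hstep : ∀ i ∈ range n,
        (-1 : R) ^ (i + 1) * ((n + 1).choose (i + 1) : R) * x ^ (i + 1) * A (x ^ (n + 2 - (i + 1)))
        = -((-1 : R) ^ i * ((n + 1).choose (i + 1) : R) * x ^ (i + 1) * A (x ^ (n + 1 - i))) := by
      intro i hi
      have e3 : n + 2 - (i + 1) = n + 1 - i := by omega
      rw [e3]
      ring
    rw [Finset.sum_congr rfl hstep, Finset.sum_neg_distrib]
    have hS4' : S4 = (∑ i ∈ range n, (-1 : R) ^ i * ((n + 1).choose (i + 1) : R) * x ^ (i + 1) * A (x ^ (n + 1 - i)))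
        + (-1 : R) ^ n * x ^ (n + 1) * A x := by
      rw [hS4, Finset.sum_range_succ]
      congr 1
      have : n + 1 - n = 1 := by omega
      rw [this, Nat.choose_self]
      push_cast
      ring
    rw [hS4']
    ring
  rw [hS14]
  ring

lemma mit_diag : ∀ (n : ℕ) (A : R → R) (x : R),
    MIt A (List.replicate n x) x
      = ∑ i ∈ range (n + 1), (-1 : R) ^ i * ((n + 1).choose i : R) * x ^ i * A (x ^ (n + 1 - i)) := by
  intro n
  induction n with
  | zero => intro A x; simp [MIt]
  | succ n ih =>
    intro A x
    have : MIt A (List.replicate (n + 1) x) x = MIt (dlt A x) (List.replicate n x) x := by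
      rw [List.replicate_succ]; rfl
    rw [this, ih (dlt A x) x, F_step]

end Aux

section QAux

lemma extract_coeffs {M : Type*} [AddCommGroup M] [Module ℚ M] (m : ℕ) (c : Fin m → M)
    (h : ∀ t : ℚ, ∑ j : Fin m, (t : ℚ) ^ (j : ℕ) • c j = 0) : ∀ j, c j = 0 := by
  classical
  set V : Matrix (Fin m) (Fin m) ℚ := Matrix.vandermonde (fun i : Fin m => (i : ℚ)) with hV
  have hdet : IsUnit V.det := by
    rw [isUnit_iff_ne_zero, hV, Matrix.det_vandermonde]
    rw [Finset.prod_ne_zero_iff]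
    intro i _
    rw [Finset.prod_ne_zero_iff]
    intro j hj
    rw [Finset.mem_Ioi] at hj
    have : (i : ℚ) < (j : ℚ) := by exact_mod_cast hj
    intro hc
    linarith
  have hinv : V⁻¹ * V = 1 := Matrix.nonsing_inv_mul V hdet
  intro k
  have step1 : c k = ∑ j : Fin m, ((1 : Matrix (Fin m) (Fin m) ℚ) k j) • c j := by
    rw [Finset.sum_eq_single k]
    · simp [Matrix.one_apply]
    · intro j _ hj; simp [Matrix.one_apply, (Ne.symm hj)]
    · intro hk; exact absurd (Finset.mem_univ k) hk
  rw [step1, ← hinv]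
  have step2 : ∀ j : Fin m, ((V⁻¹ * V) k j) • c j = ∑ i : Fin m, (V⁻¹ k i) • ((V i j) • c j) := by
    intro j
    rw [Matrix.mul_apply, Finset.sum_smul]
    exact Finset.sum_congr rfl fun i _ => by rw [mul_smul]
  rw [Finset.sum_congr rfl fun j _ => step2 j, Finset.sum_comm]
  have step3 : ∀ i : Fin m, ∑ j : Fin m, (V⁻¹ k i) • ((V i j) • c j) = (V⁻¹ k i) • (0 : M) := by
    intro i
    rw [← Finset.smul_sum]
    congr 1
    have := h ((i : ℚ))
    simpa [hV, Matrix.vandermonde] using this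
  rw [Finset.sum_congr rfl fun i _ => step3 i]
  simp

variable {R : Type*} [CommRing R] [Algebra ℚ R]

def Lin (f : R → R) : Prop := (∀ x y, f (x + y) = f x + f y) ∧ ∀ (q : ℚ) (x : R), f (q • x) = q • f x

lemma lin_of_add {A : R → R} (hadd : ∀ x y : R, A (x + y) = A x + A y) : Lin A := by
  refine ⟨hadd, fun q x => ?_⟩
  exact map_rat_smul (AddMonoidHom.mk' A hadd) q x

lemma lin_dlt {f : R → R} (hf : Lin f) (z : R) : Lin (dlt f z) := by
  constructor
  · intro x y
    simp only [dlt, mul_add, hf.1]; ring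
  · intro q x
    simp only [dlt, mul_smul_comm, hf.2, smul_sub, smul_mul_assoc]

lemma lin_mit {f : R → R} (hf : Lin f) : ∀ l : List R, Lin (fun y => MIt f l y) := by
  intro l
  induction l generalizing f with
  | nil => exact hf
  | cons z l ih => exact ih (lin_dlt hf z)

lemma dlt_add_fn (f g : R → R) (z : R) :
    dlt (fun x => f x + g x) z = fun y => dlt f z y + dlt g z y := by
  funext y; simp only [dlt]; ring

lemma dlt_smul_fn (f : R → R) (q : ℚ) (z : R) :
    dlt (fun x => q • f x) z = fun y => q • dlt f z y := by
  funext y; simp only [dlt, smul_sub, mul_smul_comm, smul_mul_assoc]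

lemma mit_add_fn : ∀ (l : List R) (f g : R → R) (y : R),
    MIt (fun x => f x + g x) l y = MIt f l y + MIt g l y := by
  intro l
  induction l with
  | nil => intro f g y; rfl
  | cons z l ih => intro f g y; simp only [MIt, dlt_add_fn]; exact ih _ _ _

lemma mit_smul_fn : ∀ (l : List R) (f : R → R) (q : ℚ) (y : R),
    MIt (fun x => q • f x) l y = q • MIt f l y := by
  intro l
  induction l with
  | nil => intro f q y; rfl
  | cons z l ih => intro f q y; simp only [MIt, dlt_smul_fn]; exact ih _ _ _

lemma dlt_front_add {f : R → R} (hf : ∀ x y, f (x + y) = f x + f y) (a b : R) :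
    dlt f (a + b) = fun y => dlt f a y + dlt f b y := by
  funext y; simp only [dlt, add_mul, hf]; ring

lemma dlt_front_smul {f : R → R} (hf : Lin f) (q : ℚ) (a : R) :
    dlt f (q • a) = fun y => q • dlt f a y := by
  funext y; simp only [dlt, smul_mul_assoc, hf.2, smul_sub, mul_smul_comm]

lemma mit_front_add {f : R → R} (hf : ∀ x y, f (x + y) = f x + f y) (a b : R) (l : List R) (y : R) :
    MIt f ((a + b) :: l) y = MIt f (a :: l) y + MIt f (b :: l) y := by
  simp only [MIt, dlt_front_add hf]; exact mit_add_fn _ _ _ _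

lemma mit_front_smul {f : R → R} (hf : Lin f) (q : ℚ) (a : R) (l : List R) (y : R) :
    MIt f ((q • a) :: l) y = q • MIt f (a :: l) y := by
  simp only [MIt, dlt_front_smul hf]; exact mit_smul_fn _ _ _ _

lemma exp_lemma {A : R → R} (hA : Lin A) : ∀ (r : ℕ) (l : List R) (z w : R) (t : ℚ),
    MIt A (l ++ List.replicate r (z + t • w)) (z + t • w)
    = ∑ j ∈ range (r + 2), (((r + 1).choose j : ℚ) * t ^ j) •
        (if j ≤ r then MIt A (l ++ List.replicate j w ++ List.replicate (r - j) z) z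
         else MIt A (l ++ List.replicate r w) w) := by
  intro r
  induction r with
  | zero =>
    intro l z w t
    have hl := lin_mit hA l
    have h1 : MIt A l (z + t • w) = MIt A l z + MIt A l (t • w) := hl.1 z (t • w)
    have h2 : MIt A l (t • w) = t • MIt A l w := hl.2 t w
    simp only [List.replicate_zero, List.append_nil]
    rw [h1, h2]
    rw [Finset.sum_range_succ, Finset.sum_range_succ, Finset.sum_range_zero]
    norm_num
  | succ r ih =>
    intro l z w t
    set Q : ℕ → R := fun j => if j ≤ r + 1 then MIt A (l ++ List.replicate j w ++ List.replicate (r + 1 - j) z) z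
      else MIt A (l ++ List.replicate (r + 1) w) w with hQ
    have e0 : MIt A (l ++ List.replicate (r + 1) (z + t • w)) (z + t • w)
        = MIt A ((z + t • w) :: (l ++ List.replicate r (z + t • w))) (z + t • w) := by
      apply mit_perm
      rw [List.replicate_succ]
      exact List.perm_middle
    rw [e0, mit_front_add hA.1 z (t • w), mit_front_smul hA t w]
    have ez : (z :: (l ++ List.replicate r (z + t • w))) = (z :: l) ++ List.replicate r (z + t • w) := by
      simp [List.cons_append]
    have ew : (w :: (l ++ List.replicate r (z + t • w))) = (w :: l) ++ List.replicate r (z + t • w) := by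
      simp [List.cons_append]
    rw [ez, ew, ih (z :: l) z w t, ih (w :: l) z w t]
    have hz : ∀ j ∈ range (r + 2),
        (((r + 1).choose j : ℚ) * t ^ j) • (if j ≤ r then MIt A ((z :: l) ++ List.replicate j w ++ List.replicate (r - j) z) z
          else MIt A ((z :: l) ++ List.replicate r w) w)
        = (((r + 1).choose j : ℚ) * t ^ j) • Q j := by
      intro j hj
      have hj' : j ≤ r + 1 := by simpa [Nat.lt_succ_iff] using hj
      congr 1
      by_cases hc : j ≤ r
      · rw [if_pos hc, hQ]
        simp only [if_pos hj']
        have e2 : r + 1 - j = (r - j) + 1 := by omega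
        rw [e2, List.replicate_succ]
        apply mit_perm
        have p1 : (z :: l) ++ List.replicate j w ++ List.replicate (r - j) z
            = z :: (l ++ List.replicate j w ++ List.replicate (r - j) z) := by simp
        rw [p1]
        exact (List.perm_middle).symm
      · have hj2 : j = r + 1 := by omega
        rw [if_neg hc, hQ, hj2]
        simp only [le_refl, if_pos]
        have e3 : r + 1 - (r + 1) = 0 := by omega
        rw [e3, List.replicate_zero, List.append_nil]
        have q1 : MIt A ((z :: l) ++ List.replicate r w) w
            = MIt A ((l ++ List.replicate r w) ++ [z]) w := by
          apply mit_perm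
          have p1 : (z :: l) ++ List.replicate r w = z :: (l ++ List.replicate r w) := by simp
          rw [p1]
          have p2 : ((l ++ List.replicate r w) ++ [z]).Perm (z :: (l ++ List.replicate r w)) := by
            simpa using (List.perm_middle (a := z) (l₁ := l ++ List.replicate r w) (l₂ := ([] : List R)))
          exact p2.symm
        rw [q1, mit_last_swap]
        rw [List.replicate_succ', ← List.append_assoc]
    have hw : ∀ j ∈ range (r + 2),
        (((r + 1).choose j : ℚ) * t ^ j) • (if j ≤ r then MIt A ((w :: l) ++ List.replicate j w ++ List.replicate (r - j) z) z
          else MIt A ((w :: l) ++ List.replicate r w) w)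
        = (((r + 1).choose j : ℚ) * t ^ j) • Q (j + 1) := by
      intro j hj
      have hj' : j ≤ r + 1 := by simpa [Nat.lt_succ_iff] using hj
      congr 1
      by_cases hc : j ≤ r
      · rw [if_pos hc, hQ]
        have hj1 : j + 1 ≤ r + 1 := by omega
        simp only [if_pos hj1]
        have e2 : r + 1 - (j + 1) = r - j := by omega
        rw [e2, List.replicate_succ]
        apply mit_perm
        have p1 : (w :: l) ++ List.replicate j w ++ List.replicate (r - j) z
            = w :: (l ++ (List.replicate j w ++ List.replicate (r - j) z)) := by simp
        rw [p1]
        have p3 : l ++ (w :: List.replicate j w) ++ List.replicate (r - j) z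
            = l ++ (w :: (List.replicate j w ++ List.replicate (r - j) z)) := by simp
        rw [p3]
        exact (List.perm_middle).symm
      · have hj2 : j = r + 1 := by omega
        rw [if_neg hc, hj2]
        have hle : ¬ (r + 1 + 1 ≤ r + 1) := by omega
        simp only [hQ, hle, if_false]
        apply mit_perm
        have p1 : (w :: l) ++ List.replicate r w = w :: (l ++ List.replicate r w) := by simp
        rw [p1, List.replicate_succ]
        exact (List.perm_middle).symm
    rw [Finset.sum_congr rfl hz, Finset.sum_congr rfl hw]
    -- final combinatorial juggle
    rw [Finset.smul_sum]
    rw [Finset.sum_range_succ' (fun j => (((r + 1 + 1).choose j : ℚ) * t ^ j) • Q j) (r + 2)]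
    rw [Finset.sum_range_succ' (fun j => (((r + 1).choose j : ℚ) * t ^ j) • Q j) (r + 1)]
    have hext : ∑ j ∈ range (r + 2), (((r + 1).choose (j + 1) : ℚ) * t ^ (j + 1)) • Q (j + 1)
        = ∑ j ∈ range (r + 1), (((r + 1).choose (j + 1) : ℚ) * t ^ (j + 1)) • Q (j + 1) := by
      rw [Finset.sum_range_succ]
      have hz0 : ((r + 1).choose (r + 1 + 1) : ℚ) = 0 := by
        rw [Nat.choose_eq_zero_of_lt (by omega)]
        norm_num
      rw [hz0, zero_mul, zero_smul, add_zero]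
    rw [← hext, add_assoc, add_comm ((((r + 1).choose 0 : ℚ) * t ^ 0) • Q 0), ← add_assoc,
      ← Finset.sum_add_distrib]
    have hcomb : ∀ j ∈ range (r + 2),
        (((r + 1).choose (j + 1) : ℚ) * t ^ (j + 1)) • Q (j + 1)
          + t • ((((r + 1).choose j : ℚ) * t ^ j) • Q (j + 1))
        = (((r + 1 + 1).choose (j + 1) : ℚ) * t ^ (j + 1)) • Q (j + 1) := by
      intro j hj
      rw [smul_smul, ← add_smul]
      congr 1
      rw [Nat.choose_succ_succ (r + 1) j]
      push_cast
      ring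
    rw [Finset.sum_congr rfl hcomb]
    congr 1

lemma polar_step {A : R → R} (hA : Lin A) {n r : ℕ}
    (hyp : ∀ (l : List R) (z : R), l.length + (r + 1) = n → MIt A (l ++ List.replicate (r + 1) z) z = 0)
    (w : R) (l' : List R) (z : R) (hl : (w :: l').length + r = n) :
    MIt A ((w :: l') ++ List.replicate r z) z = 0 := by
  have hl' : l'.length + (r + 1) = n := by simp at hl; omega
  have hsum : ∀ t : ℚ, ∑ j : Fin (r + 1 + 2), (t : ℚ) ^ (j : ℕ) •
      ((((r + 1 + 1).choose (j : ℕ) : ℚ)) •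
        (if (j : ℕ) ≤ r + 1 then MIt A (l' ++ List.replicate (j : ℕ) w ++ List.replicate (r + 1 - (j : ℕ)) z) z
         else MIt A (l' ++ List.replicate (r + 1) w) w)) = 0 := by
    intro t
    have e := exp_lemma hA (r + 1) l' z w t
    rw [hyp l' (z + t • w) hl'] at e
    rw [← Finset.sum_range (fun j => (t : ℚ) ^ j •
      ((((r + 1 + 1).choose j : ℚ)) •
        (if j ≤ r + 1 then MIt A (l' ++ List.replicate j w ++ List.replicate (r + 1 - j) z) z
         else MIt A (l' ++ List.replicate (r + 1) w) w)))]
    have e2 : ∀ j ∈ range (r + 1 + 2), (t : ℚ) ^ j •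
        ((((r + 1 + 1).choose j : ℚ)) •
          (if j ≤ r + 1 then MIt A (l' ++ List.replicate j w ++ List.replicate (r + 1 - j) z) z
           else MIt A (l' ++ List.replicate (r + 1) w) w))
        = (((r + 1 + 1).choose j : ℚ) * t ^ j) •
          (if j ≤ r + 1 then MIt A (l' ++ List.replicate j w ++ List.replicate (r + 1 - j) z) z
           else MIt A (l' ++ List.replicate (r + 1) w) w) := by
      intro j _
      rw [smul_smul, mul_comm]
    rw [Finset.sum_congr rfl e2]
    exact e.symm
  have hall := extract_coeffs (r + 1 + 2) _ hsum
  have h1 := hall ⟨1, by omega⟩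
  simp only [Fin.val_mk] at h1
  have hpos : (1 : ℕ) ≤ r + 1 := by omega
  rw [if_pos hpos] at h1
  have hne : ((r + 1 + 1).choose 1 : ℚ) ≠ 0 := by
    rw [Nat.choose_one_right]
    exact_mod_cast Nat.succ_ne_zero (r + 1)
  have hQ1 : MIt A (l' ++ List.replicate 1 w ++ List.replicate (r + 1 - 1) z) z = 0 := by
    rcases smul_eq_zero.mp h1 with hc | hv
    · exact absurd hc hne
    · exact hv
  have e4 : r + 1 - 1 = r := by omega
  rw [e4] at hQ1
  have e5 : l' ++ List.replicate 1 w ++ List.replicate r z = l' ++ (w :: List.replicate r z) := by simp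
  rw [e5] at hQ1
  have p : ((w :: l') ++ List.replicate r z).Perm (l' ++ (w :: List.replicate r z)) := by
    have p1 : (w :: l') ++ List.replicate r z = w :: (l' ++ List.replicate r z) := by simp
    rw [p1]
    exact (List.perm_middle).symm
  rw [mit_perm p]
  exact hQ1

lemma polar {A : R → R} (hA : Lin A) (n : ℕ)
    (hdiag : ∀ x : R, MIt A (List.replicate n x) x = 0) :
    ∀ l : List R, l.length = n → ∀ y, MIt A l y = 0 := by
  have main : ∀ k, k ≤ n → ∀ (l : List R) (z : R), l.length + (n - k) = n →
      MIt A (l ++ List.replicate (n - k) z) z = 0 := by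
    intro k
    induction k with
    | zero =>
      intro _ l z hl
      have hl0 : l = [] := by
        rw [← List.length_eq_zero_iff]
        omega
      subst hl0
      simpa using hdiag z
    | succ k ih =>
      intro hk l z hl
      have hk' : k ≤ n := by omega
      match l, hl with
      | [], hl =>
        exfalso
        simp at hl
        omega
      | w :: l', hl =>
        have e : n - (k + 1) + 1 = n - k := by omega
        apply polar_step hA (n := n) (r := n - (k + 1)) ?_ w l' z hl
        intro l z hlz
        rw [e] at hlz ⊢
        exact ih hk' l z hlz
  intro l hl y
  have := main n (le_refl n) l y (by simp [hl])
  simpa using this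

end QAux

theorem stmt_12 {R : Type*} [CommRing R] [Algebra ℚ R] (n : ℕ) (hn : 1 ≤ n) (A : R → R)
    (hadd : ∀ x y : R, A (x + y) = A x + A y) :
    IsDerOrd R n A ↔
      ∀ x : R, ∑ i ∈ Finset.range (n + 1),
        (-1 : R) ^ i * ((n + 1).choose i : R) * x ^ i * A (x ^ (n + 1 - i)) = 0 := by
  have hA : Lin A := lin_of_add hadd
  constructor
  · intro h x
    have h1 := (char_mit n A hadd).1 h (List.replicate n x) List.length_replicate x
    rw [mit_diag] at h1
    exact h1
  · intro h
    refine (char_mit n A hadd).2 ?_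
    have hdiag : ∀ x : R, MIt A (List.replicate n x) x = 0 := fun x => by
      rw [mit_diag]
      exact h x
    exact polar hA n hdiag
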